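/- Let G be an undirected matrix-weighted graph on n vertices. If for every pair of distinct vertices v_i, v_j the intersection over all simple paths from v_i to v_j of the subspace sums of edge-weight kernels along each path is {0}, then rank(L) = dn − d, i.e., ker(L) consists exactly of vectors with all blocks equal. -/

import Mathlib

open scoped Matrix

private lemma dot_sum_aux {d : ℕ} {ι : Type*} (s : Finset ι) (u : Fin d → ℝ)
    (f : ι → Fin d → ℝ) : u ⬝ᵥ (∑ i ∈ s, f i) = ∑ i ∈ s, u ⬝ᵥ f i := by
  simp only [dotProduct, Finset.sum_apply, Finset.mul_sum]
  exact Finset.sum_comm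

theorem ker_laplacian_eq_consensus_of_all_path_kernels_trivial {n d : ℕ}
    (E : Fin n → Fin n → Prop) [∀ i j, Decidable (E i j)]
    (hEsymm : ∀ i j, E i j → E j i) (hEirrefl : ∀ i, ¬ E i i)
    (A : Fin n → Fin n → Matrix (Fin d) (Fin d) ℝ)
    (hApsd : ∀ i j, E i j → (A i j).PosSemidef)
    (hAsymm : ∀ i j, A i j = A j i)
    -- for every pair of distinct vertices, the intersection over all simple
    -- paths joining them of the subspace sums of edge-weight kernels is trivial
    (hker : ∀ i j : Fin n, i ≠ j →
      (⨅ l : ℕ, ⨅ p : Fin (l + 1) → Fin n,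
        ⨅ _ : Function.Injective p ∧ p 0 = i ∧ p (Fin.last l) = j ∧
          ∀ k : Fin l, E (p k.castSucc) (p k.succ),
        ⨆ k : Fin l, LinearMap.ker (A (p k.castSucc) (p k.succ)).mulVecLin) = ⊥) :
    -- the kernel of the matrix-weighted Laplacian consists exactly of the
    -- vectors whose blocks are all equal
    ∀ x : Fin n → Fin d → ℝ,
      (∀ v : Fin n, (∑ w : Fin n,
          if E v w then (A v w).mulVec (x v - x w) else 0) = 0) ↔
      ∃ c : Fin d → ℝ, ∀ v : Fin n, x v = c := by
  intro x
  constructor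
  · intro hL
    -- Step 1: the quadratic form sums to zero
    have hT : ∑ v : Fin n, ∑ w : Fin n,
        (if E v w then x v ⬝ᵥ ((A v w) *ᵥ (x v - x w)) else 0) = 0 := by
      refine Finset.sum_eq_zero fun v _ => ?_
      have := congrArg (fun y => x v ⬝ᵥ y) (hL v)
      simpa [dot_sum_aux, apply_ite (fun y => x v ⬝ᵥ y)] using this
    have hT' : ∑ v : Fin n, ∑ w : Fin n,
        (if E v w then x w ⬝ᵥ ((A v w) *ᵥ (x v - x w)) else 0) =
        - ∑ v : Fin n, ∑ w : Fin n,
        (if E v w then x v ⬝ᵥ ((A v w) *ᵥ (x v - x w)) else 0) := by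
      rw [Finset.sum_comm, ← Finset.sum_neg_distrib]
      refine Finset.sum_congr rfl fun v _ => ?_
      rw [← Finset.sum_neg_distrib]
      refine Finset.sum_congr rfl fun w _ => ?_
      by_cases h : E v w
      · have h' : E w v := hEsymm _ _ h
        simp only [h, h', if_true, hAsymm w v]
        rw [← dotProduct_neg, ← Matrix.mulVec_neg, neg_sub]
      · have h' : ¬ E w v := fun hc => h (hEsymm _ _ hc)
        simp [h, h']
    have hS : ∑ v : Fin n, ∑ w : Fin n,
        (if E v w then (x v - x w) ⬝ᵥ ((A v w) *ᵥ (x v - x w)) else 0) = 0 := by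
      have : ∀ v w : Fin n,
          (if E v w then (x v - x w) ⬝ᵥ ((A v w) *ᵥ (x v - x w)) else 0) =
          (if E v w then x v ⬝ᵥ ((A v w) *ᵥ (x v - x w)) else 0) -
          (if E v w then x w ⬝ᵥ ((A v w) *ᵥ (x v - x w)) else 0) := by
        intro v w
        by_cases h : E v w <;> simp [h, sub_dotProduct]
      simp only [this, Finset.sum_sub_distrib]
      rw [hT, hT']
      simp [hT]
    -- Step 2: every edge term vanishes
    have key : ∀ v w : Fin n, E v w → (A v w) *ᵥ (x v - x w) = 0 := by
      have h1 : ∀ v ∈ Finset.univ, (0:ℝ) ≤ ∑ w : Fin n,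
          (if E v w then (x v - x w) ⬝ᵥ ((A v w) *ᵥ (x v - x w)) else 0) := by
        intro v _
        refine Finset.sum_nonneg fun w _ => ?_
        by_cases h : E v w
        · simpa [h] using (hApsd v w h).dotProduct_mulVec_nonneg (x v - x w)
        · simp [h]
      have h2 := (Finset.sum_eq_zero_iff_of_nonneg h1).mp hS
      intro v w hvw
      have h3 : ∀ w' ∈ Finset.univ, (0:ℝ) ≤
          (if E v w' then (x v - x w') ⬝ᵥ ((A v w') *ᵥ (x v - x w')) else 0) := by
        intro w' _
        by_cases h : E v w'
        · simpa [h] using (hApsd v w' h).dotProduct_mulVec_nonneg (x v - x w')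
        · simp [h]
      have h4 := (Finset.sum_eq_zero_iff_of_nonneg h3).mp (h2 v (Finset.mem_univ v))
        w (Finset.mem_univ w)
      rw [if_pos hvw] at h4
      have := ((hApsd v w hvw).dotProduct_mulVec_zero_iff (x v - x w)).mp (by simpa using h4)
      exact this
    -- Step 3: all blocks are equal
    have hall : ∀ i j : Fin n, x i = x j := by
      intro i j
      rcases eq_or_ne i j with rfl | hij
      · rfl
      have hmem : x i - x j ∈ (⨅ l : ℕ, ⨅ p : Fin (l + 1) → Fin n,
          ⨅ _ : Function.Injective p ∧ p 0 = i ∧ p (Fin.last l) = j ∧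
            ∀ k : Fin l, E (p k.castSucc) (p k.succ),
          ⨆ k : Fin l, LinearMap.ker (A (p k.castSucc) (p k.succ)).mulVecLin) := by
        simp only [Submodule.mem_iInf]
        intro l p hp
        obtain ⟨-, h0, hlast, hedge⟩ := hp
        -- telescoping
        have htel : x i - x j = ∑ k : Fin l, (x (p k.castSucc) - x (p k.succ)) := by
          have hlt : ∀ k : ℕ, k % (l+1) < l + 1 := fun k => Nat.mod_lt _ (Nat.succ_pos l)
          set f : ℕ → (Fin d → ℝ) := fun k => x (p ⟨k % (l+1), hlt k⟩) with hf
          have : ∑ k : Fin l, (x (p k.castSucc) - x (p k.succ)) =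
              ∑ k ∈ Finset.range l, (f k - f (k+1)) := by
            rw [← Fin.sum_univ_eq_sum_range]
            refine Finset.sum_congr rfl fun k _ => ?_
            have hk1 : (k:ℕ) % (l+1) = (k:ℕ) := Nat.mod_eq_of_lt (by omega)
            have hk2 : ((k:ℕ)+1) % (l+1) = (k:ℕ)+1 := Nat.mod_eq_of_lt (by omega)
            have e1 : (⟨(k:ℕ) % (l+1), hlt k⟩ : Fin (l+1)) = k.castSucc := by
              ext; simpa using hk1
            have e2 : (⟨((k:ℕ)+1) % (l+1), hlt _⟩ : Fin (l+1)) = k.succ := by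
              ext; simpa using hk2
            simp only [hf, e1, e2]
          rw [this, Finset.sum_range_sub']
          have e0 : f 0 = x i := by
            simp only [hf]
            rw [show (⟨0 % (l+1), hlt 0⟩ : Fin (l+1)) = 0 by ext; simp, h0]
          have el : f l = x j := by
            simp only [hf]
            rw [show (⟨l % (l+1), hlt l⟩ : Fin (l+1)) = Fin.last l by
              ext; simp [Nat.mod_eq_of_lt], hlast]
          rw [e0, el]
        rw [htel]
        refine Submodule.sum_mem _ fun k _ => ?_
        refine Submodule.mem_iSup_of_mem k ?_
        rw [LinearMap.mem_ker, Matrix.mulVecLin_apply]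
        exact key _ _ (hedge k)
      rw [hker i j hij] at hmem
      exact sub_eq_zero.mp (Submodule.mem_bot _ |>.mp hmem)
    rcases Nat.eq_zero_or_pos n with hn | hn
    · exact ⟨0, fun v => absurd v.2 (by omega)⟩
    · exact ⟨x ⟨0, hn⟩, fun v => hall v ⟨0, hn⟩⟩
  · rintro ⟨c, hc⟩ v
    refine Finset.sum_eq_zero fun w _ => ?_
    by_cases h : E v w
    · simp [h, hc v, hc w, Matrix.mulVec_zero]
    · simp [h]
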